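/- Given a cospan of lenses (f, φ) : A ⇌ B ⇋ C : (g, γ), the 'fake pullback' square in Lens — given by the span of lenses (π₀, 1×γ) : A ×_B C ⇌ A and (π₁, φ×1) : A ×_B C ⇌ C — commutes in Lens: the composite lens (f, φ) ∘ (π₀, 1×γ) equals the composite lens (g, γ) ∘ (π₁, φ×1), both being the lens A ×_B C ⇌ B with Get f∘π₀ and Put sending (⟨a,c⟩, u) to (φ(a,u), γ(c,u)). -/

import Mathlib

open CategoryTheory

universe w v u v₁ u₁ v₂ u₂ v₃ u₃

section Helpers

/-- The hom-type of a category structure, given explicitly. -/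
def homOf {C : Type u₁} (cc : Category.{v₁} C) (x y : C) : Type v₁ :=
  @Quiver.Hom C cc.toCategoryStruct.toQuiver x y

/-- Object part of a functor, with explicit category structures. -/
def objOf {C : Type u₁} {D : Type u₂} (cc : Category.{v₁} C) (cd : Category.{v₂} D)
    (F : @Functor C cc D cd) : C → D := F.obj

/-- Morphism part of a functor, with explicit category structures. -/
def mapOf {C : Type u₁} {D : Type u₂} (cc : Category.{v₁} C) (cd : Category.{v₂} D)
    (F : @Functor C cc D cd) {x y : C} (u : homOf cc x y) :
    homOf cd (objOf cc cd F x) (objOf cc cd F y) := F.map u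

/-- Discrete opfibration: every morphism out of the image of an object has a unique
lift with that source. -/
def IsDiscreteOpfibration {X : Type u₁} {Y : Type u₂} (cx : Category.{v₁} X)
    (cy : Category.{v₂} Y) (F : @Functor X cx Y cy) : Prop :=
  ∀ (x : X) (y : Y) (u : homOf cy (objOf cx cy F x) y),
    ∃! t : (Σ x' : X, homOf cx x x'),
      objOf cx cy F t.1 = y ∧ HEq (mapOf cx cy F t.2) u

/-- Fully faithful, as a property. -/
def IsFullyFaithfulP {X : Type u₁} {Y : Type u₂} (cx : Category.{v₁} X)
    (cy : Category.{v₂} Y) (F : @Functor X cx Y cy) : Prop :=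
  ∀ (x x' : X) (u : homOf cy (objOf cx cy F x) (objOf cx cy F x')),
    ∃! w : homOf cx x x', mapOf cx cy F w = u

end Helpers
/-- An asymmetric delta lens `A ⇌ B`: a Get functor together with a Put operation
lifting morphisms of `B` out of `get.obj a` to morphisms of `A` out of `a`, satisfying
the PutGet, GetPut and PutPut laws. -/
structure Lens (A : Type u₁) (B : Type u₂) [Category.{v₁} A] [Category.{v₂} B] where
  get : A ⥤ B
  tgt : ∀ (a : A) {b : B}, (get.obj a ⟶ b) → A
  put : ∀ (a : A) {b : B} (u : get.obj a ⟶ b), a ⟶ tgt a u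
  obj_tgt : ∀ (a : A) {b : B} (u : get.obj a ⟶ b), get.obj (tgt a u) = b
  putget : ∀ (a : A) {b : B} (u : get.obj a ⟶ b), HEq (get.map (put a u)) u
  tgt_id : ∀ a : A, tgt a (𝟙 (get.obj a)) = a
  getput : ∀ a : A, HEq (put a (𝟙 (get.obj a))) (𝟙 a)
  tgt_comp : ∀ (a : A) {b c : B} (u : get.obj a ⟶ b) (v : b ⟶ c)
    (v' : get.obj (tgt a u) ⟶ c), HEq v' v → tgt a (u ≫ v) = tgt (tgt a u) v'
  putput : ∀ (a : A) {b c : B} (u : get.obj a ⟶ b) (v : b ⟶ c)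
    (v' : get.obj (tgt a u) ⟶ c), HEq v' v →
    HEq (put a (u ≫ v)) (put a u ≫ put (tgt a u) v')
section Pullback

variable {A B C : Type u} [Category.{v} A] [Category.{v} B] [Category.{v} C]

/-- The pullback of two functors in `Cat`: objects are pairs whose images agree. -/
def PB (f : A ⥤ B) (g : C ⥤ B) : Type u := { p : A × C // f.obj p.1 = g.obj p.2 }

/-- Morphisms in the pullback category: pairs of morphisms whose images agree. -/
@[ext] structure PBHom {f : A ⥤ B} {g : C ⥤ B} (x y : PB f g) where
  m1 : x.1.1 ⟶ y.1.1
  m2 : x.1.2 ⟶ y.1.2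
  w : f.map m1 ≫ eqToHom y.2 = eqToHom x.2 ≫ g.map m2

instance PB.category (f : A ⥤ B) (g : C ⥤ B) : Category.{v} (PB f g) where
  Hom x y := PBHom x y
  id x := ⟨𝟙 _, 𝟙 _, by simp⟩
  comp m n := ⟨m.m1 ≫ n.m1, m.m2 ≫ n.m2, by
    rw [Functor.map_comp, Functor.map_comp, Category.assoc, n.w, ← Category.assoc,
      m.w, Category.assoc]⟩
  id_comp m := by apply PBHom.ext <;> simp
  comp_id m := by apply PBHom.ext <;> simp
  assoc m n o := by apply PBHom.ext <;> simp

/-- The first projection of the pullback. -/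
def PB.proj₁ (f : A ⥤ B) (g : C ⥤ B) : PB f g ⥤ A where
  obj x := x.1.1
  map m := m.m1

/-- The second projection of the pullback. -/
def PB.proj₂ (f : A ⥤ B) (g : C ⥤ B) : PB f g ⥤ C where
  obj x := x.1.2
  map m := m.m2

end Pullback
section LensHelpers

theorem heq_eqToHom_eqToHom {B : Type u₂} [Category.{v₂} B] {X Y X' Y' : B}
    (h : X = Y) (h' : X' = Y') (e : X = X') : HEq (eqToHom h) (eqToHom h') := by
  subst e; subst h; subst h'; rfl

theorem eqToHom_heq_id {B : Type u₂} [Category.{v₂} B] {X Y : B} (h : X = Y) :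
    HEq (eqToHom h) (𝟙 X) := by subst h; rfl

variable {A : Type u₁} {B : Type u₂} [Category.{v₁} A] [Category.{v₂} B] (l : Lens A B)

theorem Lens.putget' (a : A) {b : B} (u : l.get.obj a ⟶ b) :
    l.get.map (l.put a u) = u ≫ eqToHom (l.obj_tgt a u).symm := by
  have := (conj_eqToHom_iff_heq (l.get.map (l.put a u)) u rfl (l.obj_tgt a u)).2 (l.putget a u)
  simpa using this

theorem Lens.tgt_eqToHom (a : A) {b : B} (h : l.get.obj a = b) :
    l.tgt a (eqToHom h) = a := by
  subst h; simpa using l.tgt_id a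

theorem Lens.put_eqToHom (a : A) {b : B} (h : l.get.obj a = b) :
    l.put a (eqToHom h) = eqToHom (l.tgt_eqToHom a h).symm := by
  subst h
  have := (conj_eqToHom_iff_heq (l.put a (eqToHom rfl)) (𝟙 a) rfl
    (by simpa using l.tgt_id a)).2 (by simpa using l.getput a)
  simpa using this

theorem Lens.tgt_comp_eqToHom (a : A) {b c : B} (u : l.get.obj a ⟶ b) (h : b = c) :
    l.tgt a (u ≫ eqToHom h) = l.tgt a u := by
  rw [l.tgt_comp a u (eqToHom h) (eqToHom ((l.obj_tgt a u).trans h))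
    (heq_eqToHom_eqToHom _ _ (l.obj_tgt a u)), l.tgt_eqToHom]

theorem Lens.put_comp_eqToHom (a : A) {b c : B} (u : l.get.obj a ⟶ b) (h : b = c) :
    HEq (l.put a (u ≫ eqToHom h)) (l.put a u) := by
  refine (l.putput a u (eqToHom h) (eqToHom ((l.obj_tgt a u).trans h))
    (heq_eqToHom_eqToHom _ _ (l.obj_tgt a u))).trans ?_
  rw [l.put_eqToHom]
  exact comp_eqToHom_heq _ _

end LensHelpers

theorem PBHom.heq_ext {A B C : Type u} [Category.{v} A] [Category.{v} B] [Category.{v} C]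
    {f : A ⥤ B} {g : C ⥤ B} {x y y' : PB f g} (hy : y = y') (m : PBHom x y) (m' : PBHom x y')
    (h1 : HEq m.m1 m'.m1) (h2 : HEq m.m2 m'.m2) : HEq m m' := by
  subst hy; exact heq_of_eq (PBHom.ext (eq_of_heq h1) (eq_of_heq h2))

section Lenses

variable {A B C : Type u} [Category.{v} A] [Category.{v} B] [Category.{v} C]

/-- The first projection lens `(π₀, 1×γ)`. -/
def p0Lens (l1 : Lens A B) (l2 : Lens C B) : Lens (PB l1.get l2.get) A where
  get := PB.proj₁ l1.get l2.get
  tgt := fun x {a'} u =>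
    ⟨(a', l2.tgt x.1.2 (eqToHom x.2.symm ≫ l1.get.map u)), (l2.obj_tgt _ _).symm⟩
  put := fun x {a'} u =>
    ⟨u, l2.put x.1.2 (eqToHom x.2.symm ≫ l1.get.map u), by rw [l2.putget']; simp⟩
  obj_tgt := fun x {a'} u => rfl
  putget := fun x {a'} u => HEq.rfl
  tgt_id := fun x => by
    apply Subtype.ext; apply Prod.ext
    · rfl
    · show l2.tgt x.1.2 (eqToHom x.2.symm ≫ l1.get.map (𝟙 x.1.1)) = x.1.2
      rw [l1.get.map_id, Category.comp_id, l2.tgt_eqToHom]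
  getput := fun x => by
    refine PBHom.heq_ext ?_ _ _ ?_ ?_
    · apply Subtype.ext; apply Prod.ext
      · rfl
      · show l2.tgt x.1.2 (eqToHom x.2.symm ≫ l1.get.map (𝟙 x.1.1)) = x.1.2
        rw [l1.get.map_id, Category.comp_id, l2.tgt_eqToHom]
    · exact HEq.rfl
    · show HEq (l2.put x.1.2 (eqToHom x.2.symm ≫ l1.get.map (𝟙 x.1.1))) (𝟙 x.1.2)
      rw [l1.get.map_id, Category.comp_id, l2.put_eqToHom]
      exact heq_eqToHom_eqToHom _ rfl rfl
  tgt_comp := fun x {a1 a2} u v v' hv => by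
    have hv' : v' = v := eq_of_heq hv
    subst hv'
    apply Subtype.ext; apply Prod.ext
    · rfl
    · show l2.tgt x.1.2 (eqToHom x.2.symm ≫ l1.get.map (u ≫ v')) = _
      erw [l1.get.map_comp, ← Category.assoc]
      exact l2.tgt_comp _ _ _ _ (eqToHom_comp_heq _ _)
  putput := fun x {a1 a2} u v v' hv => by
    have hv' : v' = v := eq_of_heq hv
    subst hv'
    refine PBHom.heq_ext ?_ _ _ ?_ ?_
    · apply Subtype.ext; apply Prod.ext
      · rfl
      · show l2.tgt x.1.2 (eqToHom x.2.symm ≫ l1.get.map (u ≫ v')) = _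
        erw [l1.get.map_comp, ← Category.assoc]
        exact l2.tgt_comp _ _ _ _ (eqToHom_comp_heq _ _)
    · exact HEq.rfl
    · show HEq (l2.put x.1.2 (eqToHom x.2.symm ≫ l1.get.map (u ≫ v'))) _
      erw [l1.get.map_comp]
      have h := l2.putput _ (eqToHom x.2.symm ≫ l1.get.map u) (l1.get.map v') _
        (eqToHom_comp_heq _ (l2.obj_tgt _ _))
      exact (congr_arg_heq (l2.put x.1.2)
        (Category.assoc (eqToHom x.2.symm) (l1.get.map u) (l1.get.map v'))).symm.trans h

/-- The second projection lens `(π₁, φ×1)`. -/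
def p1Lens (l1 : Lens A B) (l2 : Lens C B) : Lens (PB l1.get l2.get) C where
  get := PB.proj₂ l1.get l2.get
  tgt := fun x {c'} u =>
    ⟨(l1.tgt x.1.1 (eqToHom x.2 ≫ l2.get.map u), c'), l1.obj_tgt _ _⟩
  put := fun x {c'} u =>
    ⟨l1.put x.1.1 (eqToHom x.2 ≫ l2.get.map u), u, by rw [l1.putget']; simp⟩
  obj_tgt := fun x {c'} u => rfl
  putget := fun x {c'} u => HEq.rfl
  tgt_id := fun x => by
    apply Subtype.ext; apply Prod.ext
    · show l1.tgt x.1.1 (eqToHom x.2 ≫ l2.get.map (𝟙 x.1.2)) = x.1.1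
      rw [l2.get.map_id, Category.comp_id, l1.tgt_eqToHom]
    · rfl
  getput := fun x => by
    refine PBHom.heq_ext ?_ _ _ ?_ ?_
    · apply Subtype.ext; apply Prod.ext
      · show l1.tgt x.1.1 (eqToHom x.2 ≫ l2.get.map (𝟙 x.1.2)) = x.1.1
        rw [l2.get.map_id, Category.comp_id, l1.tgt_eqToHom]
      · rfl
    · show HEq (l1.put x.1.1 (eqToHom x.2 ≫ l2.get.map (𝟙 x.1.2))) (𝟙 x.1.1)
      rw [l2.get.map_id, Category.comp_id, l1.put_eqToHom]
      exact heq_eqToHom_eqToHom _ rfl rfl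
    · exact HEq.rfl
  tgt_comp := fun x {c1 c2} u v v' hv => by
    have hv' : v' = v := eq_of_heq hv
    subst hv'
    apply Subtype.ext; apply Prod.ext
    · show l1.tgt x.1.1 (eqToHom x.2 ≫ l2.get.map (u ≫ v')) = _
      erw [l2.get.map_comp, ← Category.assoc]
      exact l1.tgt_comp _ _ _ _ (eqToHom_comp_heq _ _)
    · rfl
  putput := fun x {c1 c2} u v v' hv => by
    have hv' : v' = v := eq_of_heq hv
    subst hv'
    refine PBHom.heq_ext ?_ _ _ ?_ ?_
    · apply Subtype.ext; apply Prod.ext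
      · show l1.tgt x.1.1 (eqToHom x.2 ≫ l2.get.map (u ≫ v')) = _
        erw [l2.get.map_comp, ← Category.assoc]
        exact l1.tgt_comp _ _ _ _ (eqToHom_comp_heq _ _)
      · rfl
    · show HEq (l1.put x.1.1 (eqToHom x.2 ≫ l2.get.map (u ≫ v'))) _
      erw [l2.get.map_comp, ← Category.assoc]
      exact l1.putput _ _ _ _ (eqToHom_comp_heq _ _)
    · exact HEq.rfl

theorem eqToHom_aux {B : Type u} [Category.{v} B] {X Y b c d : B} (u : X ⟶ b) (p : b = c)
    (q : c = d) (r : X = Y) (s : Y = X) (t : b = d) :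
    (u ≫ eqToHom p) ≫ eqToHom q = eqToHom r ≫ (eqToHom s ≫ u) ≫ eqToHom t := by
  subst p q; subst r; simp

/-- The common composite lens `A ×_B C ⇌ B`. -/
def compLens (l1 : Lens A B) (l2 : Lens C B) : Lens (PB l1.get l2.get) B where
  get := PB.proj₁ l1.get l2.get ⋙ l1.get
  tgt := fun x {b} u =>
    ⟨(l1.tgt x.1.1 u, l2.tgt x.1.2 (eqToHom x.2.symm ≫ u)),
      (l1.obj_tgt _ _).trans (l2.obj_tgt _ _).symm⟩
  put := fun x {b} u =>
    ⟨l1.put x.1.1 u, l2.put x.1.2 (eqToHom x.2.symm ≫ u), by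
      erw [l1.putget', l2.putget']
      exact eqToHom_aux _ _ _ _ _ _⟩
  obj_tgt := fun x {b} u => l1.obj_tgt _ _
  putget := fun x {b} u => l1.putget _ _
  tgt_id := fun x => by
    apply Subtype.ext; apply Prod.ext
    · exact l1.tgt_id x.1.1
    · show l2.tgt x.1.2 (eqToHom x.2.symm ≫ 𝟙 (l1.get.obj x.1.1)) = x.1.2
      rw [Category.comp_id, l2.tgt_eqToHom]
  getput := fun x => by
    refine PBHom.heq_ext ?_ _ _ ?_ ?_
    · apply Subtype.ext; apply Prod.ext
      · exact l1.tgt_id x.1.1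
      · show l2.tgt x.1.2 (eqToHom x.2.symm ≫ 𝟙 (l1.get.obj x.1.1)) = x.1.2
        rw [Category.comp_id, l2.tgt_eqToHom]
    · exact l1.getput x.1.1
    · show HEq (l2.put x.1.2 (eqToHom x.2.symm ≫ 𝟙 (l1.get.obj x.1.1))) (𝟙 x.1.2)
      rw [Category.comp_id, l2.put_eqToHom]
      exact heq_eqToHom_eqToHom _ rfl rfl
  tgt_comp := fun x {b c} u v v' hv => by
    apply Subtype.ext; apply Prod.ext
    · exact l1.tgt_comp _ _ _ _ hv
    · show l2.tgt x.1.2 (eqToHom x.2.symm ≫ (u ≫ v)) = _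
      erw [← Category.assoc]
      exact l2.tgt_comp _ _ _ _ ((eqToHom_comp_heq _ _).trans hv)
  putput := fun x {b c} u v v' hv => by
    refine PBHom.heq_ext ?_ _ _ ?_ ?_
    · apply Subtype.ext; apply Prod.ext
      · exact l1.tgt_comp _ _ _ _ hv
      · show l2.tgt x.1.2 (eqToHom x.2.symm ≫ (u ≫ v)) = _
        erw [← Category.assoc]
        exact l2.tgt_comp _ _ _ _ ((eqToHom_comp_heq _ _).trans hv)
    · exact l1.putput _ _ _ _ hv
    · show HEq (l2.put x.1.2 (eqToHom x.2.symm ≫ (u ≫ v))) _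
      erw [← Category.assoc]
      exact l2.putput _ _ _ _ ((eqToHom_comp_heq _ _).trans hv)

end Lenses
/-- Given a cospan of lenses `(f, φ) : A ⇌ B ⇋ C : (g, γ)`, the fake pullback square in
`Lens` commutes: there are projection lenses `(π₀, 1×γ) : A ×_B C ⇌ A` and
`(π₁, φ×1) : A ×_B C ⇌ C` (with the Puts described below), and a lens
`l : A ×_B C ⇌ B`, with Get `f ∘ π₀ = g ∘ π₁` and Put sending `(⟨a,c⟩, u)` to
`(φ(a,u), γ(c,u))`, which is simultaneously the composite of `(f, φ)` with the first
projection lens and the composite of `(g, γ)` with the second projection lens. -/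
theorem fake_pullback_commutes {A B C : Type u} [Category.{v} A] [Category.{v} B]
    [Category.{v} C] (l1 : Lens A B) (l2 : Lens C B) :
    ∃ (p0 : Lens (PB l1.get l2.get) A) (p1 : Lens (PB l1.get l2.get) C)
      (l : Lens (PB l1.get l2.get) B),
      -- the projection lenses
      p0.get = PB.proj₁ l1.get l2.get ∧
      p1.get = PB.proj₂ l1.get l2.get ∧
      -- Put of (π₀, 1×γ): the lift of (⟨a,c⟩, u : a ⟶ a') is (u, γ(c, f u))
      (∀ (x : PB l1.get l2.get) (a' : A) (u : p0.get.obj x ⟶ a')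
        (u1 : x.1.1 ⟶ a'), HEq u1 u →
        (p0.tgt x u).1.1 = a' ∧
        (p0.tgt x u).1.2 = l2.tgt x.1.2 (eqToHom x.2.symm ≫ l1.get.map u1) ∧
        HEq (PBHom.m1 (p0.put x u)) u1 ∧
        HEq (PBHom.m2 (p0.put x u)) (l2.put x.1.2 (eqToHom x.2.symm ≫ l1.get.map u1))) ∧
      -- Put of (π₁, φ×1): the lift of (⟨a,c⟩, w : c ⟶ c') is (φ(a, g w), w)
      (∀ (x : PB l1.get l2.get) (c' : C) (u : p1.get.obj x ⟶ c')
        (u2 : x.1.2 ⟶ c'), HEq u2 u →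
        (p1.tgt x u).1.2 = c' ∧
        (p1.tgt x u).1.1 = l1.tgt x.1.1 (eqToHom x.2 ≫ l2.get.map u2) ∧
        HEq (PBHom.m2 (p1.put x u)) u2 ∧
        HEq (PBHom.m1 (p1.put x u)) (l1.put x.1.1 (eqToHom x.2 ≫ l2.get.map u2))) ∧
      -- the common composite lens: Get
      l.get = p0.get ⋙ l1.get ∧
      l.get = p1.get ⋙ l2.get ∧
      -- the common composite lens: Put
      (∀ (x : PB l1.get l2.get) (b : B) (u : l.get.obj x ⟶ b)
        (u1 : l1.get.obj x.1.1 ⟶ b) (u2 : l2.get.obj x.1.2 ⟶ b), HEq u1 u → HEq u2 u →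
        -- `l` is the composite of `l1` with the first projection lens
        (∀ w1 : p0.get.obj x ⟶ l1.tgt x.1.1 u1, HEq w1 (l1.put x.1.1 u1) →
          l.tgt x u = p0.tgt x w1 ∧ HEq (l.put x u) (p0.put x w1)) ∧
        -- `l` is the composite of `l2` with the second projection lens
        (∀ w2 : p1.get.obj x ⟶ l2.tgt x.1.2 u2, HEq w2 (l2.put x.1.2 u2) →
          l.tgt x u = p1.tgt x w2 ∧ HEq (l.put x u) (p1.put x w2)) ∧
        -- and its Put is (φ(a, u), γ(c, u))
        (l.tgt x u).1.1 = l1.tgt x.1.1 u1 ∧ (l.tgt x u).1.2 = l2.tgt x.1.2 u2 ∧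
        HEq (PBHom.m1 (l.put x u)) (l1.put x.1.1 u1) ∧
        HEq (PBHom.m2 (l.put x u)) (l2.put x.1.2 u2)) := by
  
  classical
  refine ⟨p0Lens l1 l2, p1Lens l1 l2, compLens l1 l2, rfl, rfl, ?_, ?_, rfl, ?_, ?_⟩
  · -- Put of p0
    intro x a' u u1 hu1
    have e1 : u1 = u := eq_of_heq hu1
    subst e1
    exact ⟨rfl, rfl, HEq.rfl, HEq.rfl⟩
  · -- Put of p1
    intro x c' u u2 hu2
    have e2 : u2 = u := eq_of_heq hu2
    subst e2
    exact ⟨rfl, rfl, HEq.rfl, HEq.rfl⟩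
  · -- l.get = p1.get ⋙ l2.get
    refine Functor.hext (fun (x : PB l1.get l2.get) => x.2) (fun x y m => ?_)
    refine (conj_eqToHom_iff_heq _ _ x.2 y.2).1 ?_
    erw [← Category.assoc]
    show l1.get.map m.m1 = (eqToHom x.2 ≫ l2.get.map m.m2) ≫ eqToHom y.2.symm
    rw [← m.w]
    simp
  · -- Put of the composite
    intro x b u u1 u2 hu1 hu2
    have e1 : u1 = u := eq_of_heq hu1
    subst e1
    have e2 : u2 = eqToHom x.2.symm ≫ u1 := by
      have := (conj_eqToHom_iff_heq u2 u1 x.2.symm rfl).2 hu2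
      simpa using this
    have htgt2 : l2.tgt x.1.2 (eqToHom x.2.symm ≫ u1) = l2.tgt x.1.2 u2 := by rw [e2]
    refine ⟨?_, ?_, rfl, htgt2, HEq.rfl, ?_⟩
    · -- composite of l1 with p0
      intro w1 hw1
      have ew : w1 = l1.put x.1.1 u1 := eq_of_heq hw1
      have harg : eqToHom x.2.symm ≫ l1.get.map w1
          = (eqToHom x.2.symm ≫ u1) ≫ eqToHom (l1.obj_tgt x.1.1 u1).symm := by
        rw [ew, l1.putget', ← Category.assoc]
      have ht : (compLens l1 l2).tgt x u1 = (p0Lens l1 l2).tgt x w1 := by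
        apply Subtype.ext; apply Prod.ext
        · rfl
        · show l2.tgt x.1.2 (eqToHom x.2.symm ≫ u1)
            = l2.tgt x.1.2 (eqToHom x.2.symm ≫ l1.get.map w1)
          rw [harg, l2.tgt_comp_eqToHom]
      refine ⟨ht, PBHom.heq_ext ht _ _ hw1.symm ?_⟩
      show HEq (l2.put x.1.2 (eqToHom x.2.symm ≫ u1))
        (l2.put x.1.2 (eqToHom x.2.symm ≫ l1.get.map w1))
      rw [harg]
      exact (l2.put_comp_eqToHom _ _ _).symm
    · -- composite of l2 with p1
      intro w2 hw2
      have ew : w2 = l2.put x.1.2 u2 := eq_of_heq hw2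
      have harg : eqToHom x.2 ≫ l2.get.map w2
          = u1 ≫ eqToHom (l2.obj_tgt x.1.2 u2).symm := by
        rw [ew, l2.putget', e2]; simp
      have ht : (compLens l1 l2).tgt x u1 = (p1Lens l1 l2).tgt x w2 := by
        apply Subtype.ext; apply Prod.ext
        · show l1.tgt x.1.1 u1 = l1.tgt x.1.1 (eqToHom x.2 ≫ l2.get.map w2)
          rw [harg, l1.tgt_comp_eqToHom]
        · exact htgt2
      refine ⟨ht, PBHom.heq_ext ht _ _ ?_ ?_⟩
      · show HEq (l1.put x.1.1 u1) (l1.put x.1.1 (eqToHom x.2 ≫ l2.get.map w2))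
        rw [harg]
        exact (l1.put_comp_eqToHom _ _ _).symm
      · show HEq (l2.put x.1.2 (eqToHom x.2.symm ≫ u1)) w2
        rw [ew, e2]
        exact HEq.rfl
    · show HEq (l2.put x.1.2 (eqToHom x.2.symm ≫ u1)) (l2.put x.1.2 u2)
      rw [e2]
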